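/- Let $(A, P, \alpha)$ be a semigroup dynamical system and $I$ a C*-algebra. Then the spatial tensor product $I \otimes (A \rtimes_{red} P)$ is *-isomorphic to $(I \otimes A) \rtimes_{red} P$, where $P$ acts diagonally on $I \otimes A$ with the trivial action on $I$. The isomorphism is implemented by the unitary $U : I \otimes (\ell^2(P) \otimes A) \to \ell^2(P) \otimes (I \otimes A)$ sending $x \otimes (\delta_t \otimes y) \mapsto \delta_t \otimes (x \otimes y)$, which satisfies $U(x \otimes \pi_A(a))U^* = \pi_{I\otimes A}(x \otimes a)$ and $U(1 \otimes V_s)U^* = \widetilde{V}_s$. -/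

import Mathlib

/-- Data realizing the Hilbert space tensor product `V ⊗ W` as `T`. -/
structure HTensor (V W T : Type*)
    [NormedAddCommGroup V] [InnerProductSpace ℂ V]
    [NormedAddCommGroup W] [InnerProductSpace ℂ W]
    [NormedAddCommGroup T] [InnerProductSpace ℂ T] where
  pair : V →ₗ[ℂ] W →ₗ[ℂ] T
  inner_pair : ∀ (v v' : V) (w w' : W),
    (inner ℂ (pair v w) (pair v' w') : ℂ) = (inner ℂ v v' : ℂ) * (inner ℂ w w' : ℂ)
  dense_range : closure (↑(Submodule.span ℂ {t : T | ∃ v w, t = pair v w}) : Set T)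
    = Set.univ

section Aux

variable {α : Type*} [DecidableEq α] {E : Type*} [NormedAddCommGroup E]
  [InnerProductSpace ℂ E]

lemma lp_single_add' (i : α) (a b : E) :
    lp.single (E := fun _ : α => E) 2 i (a + b) =
      lp.single 2 i a + lp.single 2 i b := by
  apply lp.ext
  funext j
  by_cases h : j = i
  · subst h
    simp [lp.single_apply_self]
  · simp [lp.single_apply_ne _ _ _ h]

/-- `lp.single` as a continuous linear map. -/
noncomputable def lpSingleCLM (i : α) : E →L[ℂ] lp (fun _ : α => E) 2 :=
  LinearMap.mkContinuous
    { toFun := fun a => lp.single 2 i a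
      map_add' := lp_single_add' i
      map_smul' := fun c a => by simpa using (lp.single_smul (E := fun _ : α => E) 2 i c a) }
    1 (fun a => by
      rw [one_mul]
      exact le_of_eq (lp.norm_single (E := fun _ : α => E) (p := 2) (by norm_num)
        i a))

@[simp] lemma lpSingleCLM_apply (i : α) (a : E) :
    lpSingleCLM i a = lp.single (E := fun _ : α => E) 2 i a := rfl

/-- Two continuous linear maps on `ℓ²` agreeing on all `lp.single`s are equal. -/
lemma lp_ext {X : Type*} [NormedAddCommGroup X] [NormedSpace ℂ X]
    {S T : lp (fun _ : α => E) 2 →L[ℂ] X}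
    (h : ∀ (t : α) (ξ : E), S (lp.single 2 t ξ) = T (lp.single 2 t ξ)) : S = T := by
  ext f
  have hf := lp.hasSum_single (E := fun _ : α => E) (p := 2) (by norm_num) f
  have h1 : HasSum (fun i => S (lp.single 2 i (f i))) (S f) := hf.mapL S
  have h2 : HasSum (fun i => T (lp.single 2 i (f i))) (T f) := hf.mapL T
  simp_rw [h] at h1
  exact h1.unique h2

variable {V W T : Type*}
    [NormedAddCommGroup V] [InnerProductSpace ℂ V]
    [NormedAddCommGroup W] [InnerProductSpace ℂ W]
    [NormedAddCommGroup T] [InnerProductSpace ℂ T]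

lemma HTensor.norm_pair (t : HTensor V W T) (v : V) (w : W) :
    ‖t.pair v w‖ = ‖v‖ * ‖w‖ := by
  have h := t.inner_pair v v w w
  rw [inner_self_eq_norm_sq_to_K, inner_self_eq_norm_sq_to_K,
    inner_self_eq_norm_sq_to_K] at h
  have hr : ‖t.pair v w‖ ^ 2 = (‖v‖ * ‖w‖) ^ 2 := by
    rw [mul_pow]
    exact_mod_cast h
  calc ‖t.pair v w‖ = Real.sqrt (‖t.pair v w‖ ^ 2) :=
        (Real.sqrt_sq (norm_nonneg _)).symm
    _ = Real.sqrt ((‖v‖ * ‖w‖) ^ 2) := by rw [hr]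
    _ = ‖v‖ * ‖w‖ := Real.sqrt_sq (mul_nonneg (norm_nonneg _) (norm_nonneg _))

/-- `t.pair v` as a continuous linear map. -/
noncomputable def HTensor.pairCLM (t : HTensor V W T) (v : V) : W →L[ℂ] T :=
  LinearMap.mkContinuous (t.pair v) ‖v‖ (fun w => le_of_eq (t.norm_pair v w))

@[simp] lemma HTensor.pairCLM_apply (t : HTensor V W T) (v : V) (w : W) :
    t.pairCLM v w = t.pair v w := rfl

/-- Two continuous linear maps agreeing on all elementary tensors are equal. -/
lemma HTensor.ext_clm {X : Type*} [NormedAddCommGroup X] [NormedSpace ℂ X]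
    (t : HTensor V W T) {S S' : T →L[ℂ] X}
    (h : ∀ v w, S (t.pair v w) = S' (t.pair v w)) : S = S' := by
  ext x
  have hx : x ∈ closure (↑(Submodule.span ℂ {z : T | ∃ v w, z = t.pair v w}) : Set T) := by
    rw [t.dense_range]; trivial
  have heq : Set.EqOn S S'
      (↑(Submodule.span ℂ {z : T | ∃ v w, z = t.pair v w}) : Set T) := by
    intro z hz
    induction hz using Submodule.span_induction with
    | mem z hz => obtain ⟨v, w, rfl⟩ := hz; exact h v w
    | zero => simp
    | add a b _ _ ha hb => simp [ha, hb]
    | smul c a _ ha => simp [ha]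
  exact (heq.closure S.continuous S'.continuous) hx

end Aux

set_option maxHeartbeats 1000000 in
/-- For a semigroup dynamical system `(A, P, α)` and a
C*-algebra `I`, the unitary `U : I ⊗ (ℓ²(P) ⊗ A) → ℓ²(P) ⊗ (I ⊗ A)`,
`x ⊗ (δ_t ⊗ y) ↦ δ_t ⊗ (x ⊗ y)`, satisfies
`U (x ⊗ π_A(a)) U* = π_{I⊗A}(x ⊗ a)` and `U (1 ⊗ V_s) U* = Ṽ_s`, and
conjugation by `U` carries `I ⊗ (A ⋊_red P)` *-isomorphically onto
`(I ⊗ A) ⋊_red P`.  Everything is realized spatially: `A` and `I` act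
faithfully and nondegenerately on Hilbert spaces `K`, `KI`; `ℓ²(P) ⊗ K` is the
Hilbert sum `lp (fun _ : P => K) 2`; the remaining tensor products are
presented by `HTensor` data, with elementary-tensor operators `otimes1`,
`otimes2` given by their defining properties. -/
theorem stmt4 {P : Type*} [Monoid P] [DecidableEq P]
    {A I : Type*} [NonUnitalCStarAlgebra A] [NonUnitalCStarAlgebra I]
    -- faithful nondegenerate representations of `A` and `I`
    {K KI : Type*} [NormedAddCommGroup K] [InnerProductSpace ℂ K] [CompleteSpace K]
    [NormedAddCommGroup KI] [InnerProductSpace ℂ KI] [CompleteSpace KI]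
    (ρA : A →⋆ₙₐ[ℂ] (K →L[ℂ] K)) (hρA : Function.Injective ρA)
    (hρAnd : closure (↑(Submodule.span ℂ {ξ : K | ∃ a η, ξ = ρA a η}) : Set K) = Set.univ)
    (ρI : I →⋆ₙₐ[ℂ] (KI →L[ℂ] KI)) (hρI : Function.Injective ρI)
    (hρInd : closure (↑(Submodule.span ℂ {ξ : KI | ∃ x η, ξ = ρI x η}) : Set KI) = Set.univ)
    -- the action of `P` on `A`
    (α : P → (A →⋆ₙₐ[ℂ] A))
    (hαmul : ∀ s t, (α s).comp (α t) = α (s * t))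
    -- `ℓ²(P) ⊗ K` and the left regular representation `(π, V)` of `(A, P, α)`
    (π : A → (lp (fun _ : P => K) 2 →L[ℂ] lp (fun _ : P => K) 2))
    (hπ : ∀ (x : A) (t : P) (ξ : K),
      π x (lp.single 2 t ξ) = lp.single 2 t (ρA (α t x) ξ))
    (V : P → (lp (fun _ : P => K) 2 →L[ℂ] lp (fun _ : P => K) 2))
    (hV : ∀ (s t : P) (ξ : K), V s (lp.single 2 t ξ) = lp.single 2 (t * s) ξ)
    -- `KI ⊗ K` and elementary tensor operators on it
    {KIA : Type*} [NormedAddCommGroup KIA] [InnerProductSpace ℂ KIA] [CompleteSpace KIA]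
    (tKA : HTensor KI K KIA)
    (otimes1 : (KI →L[ℂ] KI) → (K →L[ℂ] K) → (KIA →L[ℂ] KIA))
    (hotimes1 : ∀ S T ξ η, otimes1 S T (tKA.pair ξ η) = tKA.pair (S ξ) (T η))
    -- `KI ⊗ (ℓ²(P) ⊗ K)` and elementary tensor operators on it
    {HT : Type*} [NormedAddCommGroup HT] [InnerProductSpace ℂ HT] [CompleteSpace HT]
    (tIH : HTensor KI (lp (fun _ : P => K) 2) HT)
    (otimes2 : (KI →L[ℂ] KI) → (lp (fun _ : P => K) 2 →L[ℂ] lp (fun _ : P => K) 2) →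
      (HT →L[ℂ] HT))
    (hotimes2 : ∀ S T ξ η, otimes2 S T (tIH.pair ξ η) = tIH.pair (S ξ) (T η))
    -- the canonical unitary `U`
    (U : HT ≃ₗᵢ[ℂ] lp (fun _ : P => KIA) 2)
    (hU : ∀ (ξ : KI) (t : P) (η : K),
      U (tIH.pair ξ (lp.single 2 t η)) = lp.single 2 t (tKA.pair ξ η))
    -- the left regular representation `(π_{I⊗A}, Ṽ)` of `(I ⊗ A, P, 1 ⊗ α)`
    (π' : I → A → (lp (fun _ : P => KIA) 2 →L[ℂ] lp (fun _ : P => KIA) 2))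
    (hπ' : ∀ (x : I) (a : A) (t : P) (ζ : KIA),
      π' x a (lp.single 2 t ζ) = lp.single 2 t (otimes1 (ρI x) (ρA (α t a)) ζ))
    (V' : P → (lp (fun _ : P => KIA) 2 →L[ℂ] lp (fun _ : P => KIA) 2))
    (hV' : ∀ (s t : P) (ζ : KIA), V' s (lp.single 2 t ζ) = lp.single 2 (t * s) ζ) :
    -- `U (x ⊗ π_A(a)) U* = π_{I⊗A}(x ⊗ a)`
    (∀ (x : I) (a : A),
      (U.toContinuousLinearEquiv : HT ≃L[ℂ] lp (fun _ : P => KIA) 2).toContinuousLinearMap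
        ∘L otimes2 (ρI x) (π a)
        ∘L (U.symm.toContinuousLinearEquiv :
            lp (fun _ : P => KIA) 2 ≃L[ℂ] HT).toContinuousLinearMap = π' x a) ∧
    -- `U (1 ⊗ V_s) U* = Ṽ_s`
    (∀ s : P,
      (U.toContinuousLinearEquiv : HT ≃L[ℂ] lp (fun _ : P => KIA) 2).toContinuousLinearMap
        ∘L otimes2 1 (V s)
        ∘L (U.symm.toContinuousLinearEquiv :
            lp (fun _ : P => KIA) 2 ≃L[ℂ] HT).toContinuousLinearMap = V' s) ∧
    -- conjugation by `U` maps `I ⊗ (A ⋊_red P)` onto `(I ⊗ A) ⋊_red P`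
    ((fun T : HT →L[ℂ] HT =>
        (U.toContinuousLinearEquiv : HT ≃L[ℂ] lp (fun _ : P => KIA) 2).toContinuousLinearMap
          ∘L T ∘L (U.symm.toContinuousLinearEquiv :
              lp (fun _ : P => KIA) 2 ≃L[ℂ] HT).toContinuousLinearMap) ''
      closure (↑(NonUnitalStarAlgebra.adjoin ℂ
        {T : HT →L[ℂ] HT | ∃ (x : I) (s : P) (a : A),
          T = otimes2 (ρI x) (V s ∘L π a)}) : Set (HT →L[ℂ] HT))
      = closure (↑(NonUnitalStarAlgebra.adjoin ℂ
        {T : lp (fun _ : P => KIA) 2 →L[ℂ] lp (fun _ : P => KIA) 2 |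
          ∃ (s : P) (x : I) (a : A), T = V' s ∘L π' x a})
          : Set (lp (fun _ : P => KIA) 2 →L[ℂ] lp (fun _ : P => KIA) 2))) := by
  classical
  set L2 := lp (fun _ : P => KIA) 2 with hL2def
  -- the coerced continuous linear maps induced by `U`
  have hu : ∀ z : HT,
      (U.toContinuousLinearEquiv : HT ≃L[ℂ] L2).toContinuousLinearMap z = U z := fun _ => rfl
  have hv : ∀ z : L2,
      (U.symm.toContinuousLinearEquiv : L2 ≃L[ℂ] HT).toContinuousLinearMap z = U.symm z :=
    fun _ => rfl
  -- extensionality on `L2` through elementary tensors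
  have extL2 : ∀ {S S' : L2 →L[ℂ] L2},
      (∀ (t : P) (ξ : KI) (η : K),
        S (lp.single 2 t (tKA.pair ξ η)) = S' (lp.single 2 t (tKA.pair ξ η))) → S = S' := by
    intro S S' h
    apply lp_ext
    intro t ζ
    have h2 : S ∘L lpSingleCLM t = S' ∘L lpSingleCLM t :=
      tKA.ext_clm (fun v w => by
        exact h t v w)
    exact ContinuousLinearMap.ext_iff.mp h2 ζ
  -- the key conjugation computation
  have key : ∀ (R : KI →L[ℂ] KI) (M : lp (fun _ : P => K) 2 →L[ℂ] lp (fun _ : P => K) 2)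
      (N : L2 →L[ℂ] L2),
      (∀ (t : P) (ξ : KI) (η : K),
        N (lp.single 2 t (tKA.pair ξ η)) = U (tIH.pair (R ξ) (M (lp.single 2 t η)))) →
      (U.toContinuousLinearEquiv : HT ≃L[ℂ] L2).toContinuousLinearMap
        ∘L otimes2 R M
        ∘L (U.symm.toContinuousLinearEquiv : L2 ≃L[ℂ] HT).toContinuousLinearMap = N := by
    intro R M N hN
    apply extL2
    intro t ξ η
    rw [hN, ContinuousLinearMap.comp_apply, ContinuousLinearMap.comp_apply, hv, hu]
    rw [← hU ξ t η, U.symm_apply_apply, hotimes2]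
  -- first conjugation identity
  have conj1 : ∀ (x : I) (a : A),
      (U.toContinuousLinearEquiv : HT ≃L[ℂ] L2).toContinuousLinearMap
        ∘L otimes2 (ρI x) (π a)
        ∘L (U.symm.toContinuousLinearEquiv : L2 ≃L[ℂ] HT).toContinuousLinearMap = π' x a := by
    intro x a
    refine key _ _ _ (fun t ξ η => ?_)
    rw [hπ' x a t, hotimes1, hπ a t η, hU]
  -- second conjugation identity
  have conj2 : ∀ s : P,
      (U.toContinuousLinearEquiv : HT ≃L[ℂ] L2).toContinuousLinearMap
        ∘L otimes2 1 (V s)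
        ∘L (U.symm.toContinuousLinearEquiv : L2 ≃L[ℂ] HT).toContinuousLinearMap = V' s := by
    intro s
    refine key _ _ _ (fun t ξ η => ?_)
    rw [hV' s t, hV s t η, hU, ContinuousLinearMap.one_apply]
  -- third conjugation identity, for the generators
  have conj3 : ∀ (x : I) (s : P) (a : A),
      (U.toContinuousLinearEquiv : HT ≃L[ℂ] L2).toContinuousLinearMap
        ∘L otimes2 (ρI x) (V s ∘L π a)
        ∘L (U.symm.toContinuousLinearEquiv : L2 ≃L[ℂ] HT).toContinuousLinearMap
        = V' s ∘L π' x a := by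
    intro x s a
    refine key _ _ _ (fun t ξ η => ?_)
    rw [ContinuousLinearMap.comp_apply, hπ' x a t, hotimes1, hV' s t,
      ContinuousLinearMap.comp_apply, hπ a t η, hV s t, hU]
  refine ⟨conj1, conj2, ?_⟩
  -- conjugation as a star algebra homomorphism
  let Φ : (HT →L[ℂ] HT) →⋆ₙₐ[ℂ] (L2 →L[ℂ] L2) :=
    { toFun := fun T =>
        (U.toContinuousLinearEquiv : HT ≃L[ℂ] L2).toContinuousLinearMap
          ∘L T ∘L (U.symm.toContinuousLinearEquiv : L2 ≃L[ℂ] HT).toContinuousLinearMap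
      map_smul' := fun c T => by
        ext z
        simp [hu, hv]
      map_zero' := by ext z; simp
      map_add' := fun S T => by
        ext z
        simp [hu, hv]
      map_mul' := fun S T => by
        ext z
        simp only [ContinuousLinearMap.mul_apply, ContinuousLinearMap.comp_apply, hu, hv]
        rw [U.symm_apply_apply]
      map_star' := fun T => by
        have hu' : (U.toContinuousLinearEquiv : HT ≃L[ℂ] L2).toContinuousLinearMap
            = (U : HT →L[ℂ] L2) := rfl
        have hv' : (U.symm.toContinuousLinearEquiv : L2 ≃L[ℂ] HT).toContinuousLinearMap
            = (U.symm : L2 →L[ℂ] HT) := rfl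
        simp only [hu', hv', ContinuousLinearMap.star_eq_adjoint,
          ContinuousLinearMap.adjoint_comp, LinearIsometryEquiv.adjoint_eq_symm,
          LinearIsometryEquiv.symm_symm]
        ext z
        rfl }
  -- conjugation as a continuous linear equivalence (for topological purposes)
  let e : (HT →L[ℂ] HT) ≃L[ℂ] (L2 →L[ℂ] L2) :=
    (U.toContinuousLinearEquiv).arrowCongr (U.toContinuousLinearEquiv)
  have he : ∀ T : HT →L[ℂ] HT, e T =
      (U.toContinuousLinearEquiv : HT ≃L[ℂ] L2).toContinuousLinearMap
        ∘L T ∘L (U.symm.toContinuousLinearEquiv : L2 ≃L[ℂ] HT).toContinuousLinearMap :=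
    fun T => rfl
  set S1 : Set (HT →L[ℂ] HT) :=
    {T : HT →L[ℂ] HT | ∃ (x : I) (s : P) (a : A), T = otimes2 (ρI x) (V s ∘L π a)} with hS1
  set S2 : Set (L2 →L[ℂ] L2) :=
    {T : L2 →L[ℂ] L2 | ∃ (s : P) (x : I) (a : A), T = V' s ∘L π' x a} with hS2
  have himg : Φ '' S1 = S2 := by
    ext T
    constructor
    · rintro ⟨T', ⟨x, s, a, rfl⟩, rfl⟩
      exact ⟨s, x, a, conj3 x s a⟩
    · rintro ⟨s, x, a, rfl⟩
      exact ⟨otimes2 (ρI x) (V s ∘L π a), ⟨x, s, a, rfl⟩, conj3 x s a⟩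
  have hfun : (fun T : HT →L[ℂ] HT =>
      (U.toContinuousLinearEquiv : HT ≃L[ℂ] L2).toContinuousLinearMap
        ∘L T ∘L (U.symm.toContinuousLinearEquiv : L2 ≃L[ℂ] HT).toContinuousLinearMap)
      = ⇑Φ := rfl
  have hfun' : ⇑Φ = ⇑e := funext fun T => (he T).symm
  calc (fun T : HT →L[ℂ] HT =>
      (U.toContinuousLinearEquiv : HT ≃L[ℂ] L2).toContinuousLinearMap
        ∘L T ∘L (U.symm.toContinuousLinearEquiv : L2 ≃L[ℂ] HT).toContinuousLinearMap) ''
      closure (↑(NonUnitalStarAlgebra.adjoin ℂ S1) : Set (HT →L[ℂ] HT))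
      = ⇑e '' closure (↑(NonUnitalStarAlgebra.adjoin ℂ S1) : Set (HT →L[ℂ] HT)) := by
        rw [hfun, hfun']
    _ = closure (⇑e '' (↑(NonUnitalStarAlgebra.adjoin ℂ S1) : Set (HT →L[ℂ] HT))) :=
        e.toHomeomorph.image_closure _
    _ = closure (⇑Φ '' (↑(NonUnitalStarAlgebra.adjoin ℂ S1) : Set (HT →L[ℂ] HT))) := by
        rw [hfun']
    _ = closure (↑(NonUnitalStarAlgebra.adjoin ℂ S2) : Set (L2 →L[ℂ] L2)) := by
        rw [← NonUnitalStarSubalgebra.coe_map _ Φ, NonUnitalStarAlgHom.map_adjoin, himg]
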